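/- arXiv:2002.00697 — 2 statements merged into one kernel-verified Lean document; each statement's English description precedes it below -/
import Mathlib

section
/- The derived subalgebra [Iuₙ, Iuₙ] equals the linear span of the set {x_{ij} : 1 ≤ i, j ≤ n, i ≠ j} ∪ {b_i − b_j : 1 ≤ i, j ≤ n}. -/
/-- Index set for the basis of `Iuₙ`: the off-diagonal pairs indexing the `x_{ij}` (`i ≠ j`),
then the `a_i`'s, then the `b_i`'s. -/
abbrev IuIdx (n : ℕ) : Type := { p : Fin n × Fin n // p.1 ≠ p.2 } ⊕ (Fin n ⊕ Fin n)

/-- `Iuₙ`: the free `K`-vector space on the basis `{x_{ij} : i ≠ j} ∪ {a_i} ∪ {b_i}`. -/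
abbrev Iu (n : ℕ) (K : Type*) [Field K] : Type _ := IuIdx n →₀ K

variable (n : ℕ) (K : Type*) [Field K]

/-- The basis element `x_{ij}` (`i ≠ j`). -/
noncomputable def xE (i j : Fin n) (h : i ≠ j) : Iu n K :=
  Finsupp.single (Sum.inl ⟨(i, j), h⟩) 1

/-- The basis element `a_i`. -/
noncomputable def aE (i : Fin n) : Iu n K := Finsupp.single (Sum.inr (Sum.inl i)) 1

/-- The basis element `b_i`. -/
noncomputable def bE (i : Fin n) : Iu n K := Finsupp.single (Sum.inr (Sum.inr i)) 1

/-- `x_{ij}` as a total function (junk value `0` when `i = j`). -/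
noncomputable def xe (i j : Fin n) : Iu n K := if h : i ≠ j then xE n K i j h else 0

/-- The length `λ(i,j)`: equals `j - i` if `i < j`, and `n - (i - j)` if `i > j`. -/
def lam (n : ℕ) (i j : Fin n) : ℕ := (j - i : Fin n).val

/-- The bracket of `Iuₙ` on basis elements:
`[x_{ij}, x_{kl}] = δ_{jk} x_{il} - δ_{li} x_{kj}` if `λ(i,j) + λ(k,l) < n` and `0` otherwise
(unless both `j = k` and `l = i`); `[x_{ij}, x_{ji}] = ½(b_i - b_j)`;
`[a_i, x_{jk}] = (δ_{ij} - δ_{ik}) x_{jk}`; `[b_i, x_{jk}] = 0`;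
`[a_i, a_j] = [b_i, b_j] = [a_i, b_j] = 0`; extended antisymmetrically. -/
noncomputable def bb : IuIdx n → IuIdx n → Iu n K
  | Sum.inl ⟨(i, j), _⟩, Sum.inl ⟨(k, l), _⟩ =>
      if k = j ∧ l = i then ((2 : K)⁻¹) • (bE n K i - bE n K j)
      else if lam n i j + lam n k l < n then
        (if j = k then xe n K i l else 0) - (if l = i then xe n K k j else 0)
      else 0
  | Sum.inr (Sum.inl i), Sum.inl ⟨(j, k), _⟩ =>
      (((if i = j then 1 else 0) : K) - ((if i = k then 1 else 0) : K)) • xe n K j k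
  | Sum.inl ⟨(j, k), _⟩, Sum.inr (Sum.inl i) =>
      -((((if i = j then 1 else 0) : K) - ((if i = k then 1 else 0) : K)) • xe n K j k)
  | _, _ => 0

/-- The bilinear bracket of `Iuₙ`, extended bilinearly from its values on basis elements. -/
noncomputable def br : Iu n K →ₗ[K] Iu n K →ₗ[K] Iu n K :=
  Finsupp.lift (Iu n K →ₗ[K] Iu n K) K (IuIdx n) fun s =>
    Finsupp.lift (Iu n K) K (IuIdx n) fun t => bb n K s t

/-- The span of all brackets of elements of `S` with elements of `T`. -/
noncomputable def bracketSpan (S T : Submodule K (Iu n K)) : Submodule K (Iu n K) :=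
  Submodule.span K {w | ∃ u ∈ S, ∃ v ∈ T, w = br n K u v}

section T
variable {n K}
lemma bb_xx (i j k l : Fin n) (hij : i ≠ j) (hkl : k ≠ l) :
    bb n K (Sum.inl ⟨(i, j), hij⟩) (Sum.inl ⟨(k, l), hkl⟩) =
      if k = j ∧ l = i then ((2 : K)⁻¹) • (bE n K i - bE n K j)
      else if lam n i j + lam n k l < n then
        (if j = k then xe n K i l else 0) - (if l = i then xe n K k j else 0)
      else 0 := rfl

lemma bb_ax (i j k : Fin n) (h : j ≠ k) :
    bb n K (Sum.inr (Sum.inl i)) (Sum.inl ⟨(j, k), h⟩) =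
      (((if i = j then 1 else 0) : K) - ((if i = k then 1 else 0) : K)) • xe n K j k := rfl

lemma bb_xa (i j k : Fin n) (h : j ≠ k) :
    bb n K (Sum.inl ⟨(j, k), h⟩) (Sum.inr (Sum.inl i)) =
      -((((if i = j then 1 else 0) : K) - ((if i = k then 1 else 0) : K)) • xe n K j k) := rfl

lemma bb_other1 (s : IuIdx n) (k : Fin n) : bb n K s (Sum.inr (Sum.inr k)) = 0 := by
  rcases s with ⟨⟨i, j⟩, h⟩ | i | i <;> rfl

lemma bb_other2 (s : IuIdx n) (k : Fin n) : bb n K (Sum.inr (Sum.inr k)) s = 0 := by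
  rcases s with ⟨⟨i, j⟩, h⟩ | i | i <;> rfl

lemma bb_aa (i j : Fin n) : bb n K (Sum.inr (Sum.inl i)) (Sum.inr (Sum.inl j)) = 0 := rfl

lemma br_single' (s t : IuIdx n) (c d : K) :
    br n K (Finsupp.single s c) (Finsupp.single t d) = (c * d) • bb n K s t := by
  simp [br, Finsupp.lift_apply, Finsupp.sum_single_index, smul_smul]
lemma xe_mem (i j : Fin n) :
    xe n K i j ∈ Submodule.span K
        ({v | ∃ (i j : Fin n) (h : i ≠ j), v = xE n K i j h} ∪
          {v | ∃ i j : Fin n, v = bE n K i - bE n K j}) := by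
  rw [xe]
  split
  · exact Submodule.subset_span (Or.inl ⟨i, j, ‹_›, rfl⟩)
  · exact Submodule.zero_mem _

lemma bb_mem (s t : IuIdx n) :
    bb n K s t ∈ Submodule.span K
        ({v | ∃ (i j : Fin n) (h : i ≠ j), v = xE n K i j h} ∪
          {v | ∃ i j : Fin n, v = bE n K i - bE n K j}) := by
  have hb : ∀ i j : Fin n, bE n K i - bE n K j ∈ Submodule.span K
        ({v | ∃ (i j : Fin n) (h : i ≠ j), v = xE n K i j h} ∪
          {v | ∃ i j : Fin n, v = bE n K i - bE n K j}) := fun i j =>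
    Submodule.subset_span (Or.inr ⟨i, j, rfl⟩)
  rcases s with ⟨⟨i, j⟩, hij⟩ | i | i <;> rcases t with ⟨⟨k, l⟩, hkl⟩ | k | k
  · rw [bb_xx]
    split
    · exact Submodule.smul_mem _ _ (hb i j)
    · split
      · exact Submodule.sub_mem _
          (by split; exacts [xe_mem i l, Submodule.zero_mem _])
          (by split; exacts [xe_mem k j, Submodule.zero_mem _])
      · exact Submodule.zero_mem _
  · rw [bb_xa]
    exact Submodule.neg_mem _ (Submodule.smul_mem _ _ (xe_mem i j))
  · rw [bb_other1]; exact Submodule.zero_mem _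
  · rw [bb_ax]
    exact Submodule.smul_mem _ _ (xe_mem k l)
  · rw [bb_aa]; exact Submodule.zero_mem _
  · rw [bb_other1]; exact Submodule.zero_mem _
  all_goals rw [bb_other2]; exact Submodule.zero_mem _

lemma br_mem (u v : Iu n K) :
    br n K u v ∈ Submodule.span K
        ({v | ∃ (i j : Fin n) (h : i ≠ j), v = xE n K i j h} ∪
          {v | ∃ i j : Fin n, v = bE n K i - bE n K j}) := by
  induction u using Finsupp.induction_linear with
  | zero => rw [map_zero, LinearMap.zero_apply]; exact Submodule.zero_mem _
  | add f g hf hg => rw [map_add, LinearMap.add_apply]; exact Submodule.add_mem _ hf hg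
  | single s c =>
    induction v using Finsupp.induction_linear with
    | zero => rw [map_zero]; exact Submodule.zero_mem _
    | add f g hf hg => rw [map_add]; exact Submodule.add_mem _ hf hg
    | single t d =>
      rw [br_single']
      exact Submodule.smul_mem _ _ (bb_mem s t)

end T

/-- the derived subalgebra `[Iuₙ, Iuₙ]` equals the span of
`{x_{ij} : i ≠ j} ∪ {b_i - b_j}`. -/
theorem stmt12 (n : ℕ) (hn : 2 ≤ n) (K : Type*) [Field K] (hK : (2 : K) ≠ 0) :
    bracketSpan n K ⊤ ⊤ =
      Submodule.span K
        ({v | ∃ (i j : Fin n) (h : i ≠ j), v = xE n K i j h} ∪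
          {v | ∃ i j : Fin n, v = bE n K i - bE n K j}) := by
  apply le_antisymm
  · rw [bracketSpan, Submodule.span_le]
    rintro w ⟨u, -, v, -, rfl⟩
    exact br_mem u v
  · rw [Submodule.span_le]
    rintro w (⟨i, j, h, rfl⟩ | ⟨i, j, rfl⟩)
    · apply Submodule.subset_span
      refine ⟨aE n K i, trivial, xE n K i j h, trivial, ?_⟩
      rw [aE, xE, br_single', bb_ax, if_pos rfl, if_neg (fun hh => h hh), xe, dif_pos h, xE]
      simp
    · by_cases hij : i = j
      · subst hij
        rw [sub_self]
        exact Submodule.zero_mem _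
      · apply Submodule.subset_span
        refine ⟨(2 : K) • xE n K i j hij, trivial, xE n K j i (Ne.symm hij), trivial, ?_⟩
        rw [xE, xE, Finsupp.smul_single, smul_eq_mul, mul_one, br_single',
          bb_xx, if_pos ⟨rfl, rfl⟩]
        rw [mul_one, smul_smul, mul_inv_cancel₀ hK, one_smul]
end

section
/- The subspace of Iuₙ spanned by {x_{ij} : i ≠ j} ∪ {b_i : 1 ≤ i ≤ n} is a nilpotent Lie subalgebra of Iuₙ; in particular, the derived subalgebra [Iuₙ, Iuₙ] is a nilpotent Lie algebra. -/
variable (n : ℕ) (K : Type*) [Field K]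

/-- The subspace of `Iuₙ` spanned by `{x_{ij} : i ≠ j} ∪ {b_i}`. -/
noncomputable def nilPart : Submodule K (Iu n K) :=
  Submodule.span K
    ({v | ∃ (i j : Fin n) (h : i ≠ j), v = xE n K i j h} ∪
      {v | ∃ i : Fin n, v = bE n K i})

/-- The lower central series of a subspace `N`: `C 0 = N`, `C (k+1) = [N, C k]`. -/
noncomputable def lcs (N : Submodule K (Iu n K)) : ℕ → Submodule K (Iu n K)
  | 0 => N
  | k + 1 => bracketSpan n K N (lcs N k)


section Aux

/-- The index set of the `m`-th filtration piece: `x_{ij}` with `λ(i,j) ≥ m`, and the `b_i`. -/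
def Fset (n m : ℕ) : Set (IuIdx n) :=
  {s | match s with
    | Sum.inl p => m ≤ lam n p.1.1 p.1.2
    | Sum.inr (Sum.inl _) => False
    | Sum.inr (Sum.inr _) => True}

/-- The `m`-th filtration piece. -/
noncomputable def Fm (n : ℕ) (K : Type*) [Field K] (m : ℕ) : Submodule K (Iu n K) :=
  Finsupp.supported K K (Fset n m)

variable {n : ℕ} {K : Type*} [Field K]

lemma lam_pos {i j : Fin n} (h : i ≠ j) : 1 ≤ lam n i j := by
  haveI : NeZero n := ⟨(Fin.pos i).ne'⟩
  have hne : j - i ≠ 0 := sub_ne_zero_of_ne (Ne.symm h)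
  have h1 : (0 : Fin n) < j - i := (Fin.pos_iff_ne_zero' _).mpr hne
  have h2 : (0 : Fin n).val < (j - i).val := h1
  rw [Fin.val_zero] at h2; exact h2

lemma lam_lt (i j : Fin n) : lam n i j < n := (j - i).isLt

lemma lam_add {i j l : Fin n} (hlt : lam n i j + lam n j l < n) :
    lam n i l = lam n i j + lam n j l := by
  haveI : NeZero n := ⟨(Fin.pos i).ne'⟩
  have key : l - i = (j - i) + (l - j) := by abel
  show (l - i).val = (j - i).val + (l - j).val
  rw [key, Fin.add_def]
  exact Nat.mod_eq_of_lt hlt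

lemma br_single_single (s t : IuIdx n) :
    br n K (Finsupp.single s 1) (Finsupp.single t 1) = bb n K s t := by
  simp [br, Finsupp.lift_apply, Finsupp.sum_single_index]

lemma br_mem_s13 {A B : Set (IuIdx n)} {P : Submodule K (Iu n K)}
    (h : ∀ s ∈ A, ∀ t ∈ B, bb n K s t ∈ P)
    {u v : Iu n K} (hu : u ∈ Finsupp.supported K K A) (hv : v ∈ Finsupp.supported K K B) :
    br n K u v ∈ P := by
  rw [Finsupp.supported_eq_span_single] at hu hv
  induction hu using Submodule.span_induction with
  | mem x hx =>
    obtain ⟨s, hs, rfl⟩ := hx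
    induction hv using Submodule.span_induction with
    | mem y hy =>
      obtain ⟨t, ht, rfl⟩ := hy
      rw [br_single_single]; exact h s hs t ht
    | zero => simp
    | add y z _ _ hy hz => rw [map_add]; exact P.add_mem hy hz
    | smul c y _ hy => rw [map_smul]; exact P.smul_mem c hy
  | zero => simp
  | add x y _ _ hx hy =>
    rw [map_add, LinearMap.add_apply]; exact P.add_mem hx hy
  | smul c x _ hx =>
    rw [map_smul, LinearMap.smul_apply]; exact P.smul_mem c hx

lemma bE_mem_Fm (i : Fin n) (m : ℕ) : bE n K i ∈ Fm n K m :=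
  Finsupp.single_mem_supported K 1 (by trivial)

lemma xe_mem_Fm {i j : Fin n} {m : ℕ} (h : i ≠ j → m ≤ lam n i j) :
    xe n K i j ∈ Fm n K m := by
  unfold xe
  split
  · exact Finsupp.single_mem_supported K 1 (h ‹i ≠ j›)
  · exact zero_mem _

lemma ite_mem_sub {c : Prop} [Decidable c] {x : Iu n K} {P : Submodule K (Iu n K)}
    (h : c → x ∈ P) : (if c then x else 0) ∈ P := by
  split
  · exact h ‹c›
  · exact zero_mem _

lemma xE_mem_nilPart (i j : Fin n) (h : i ≠ j) : xE n K i j h ∈ nilPart n K :=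
  Submodule.subset_span (Or.inl ⟨i, j, h, rfl⟩)

lemma bE_mem_nilPart (i : Fin n) : bE n K i ∈ nilPart n K :=
  Submodule.subset_span (Or.inr ⟨i, rfl⟩)

lemma xe_mem_nilPart (i j : Fin n) : xe n K i j ∈ nilPart n K := by
  unfold xe
  split
  · exact xE_mem_nilPart _ _ _
  · exact zero_mem _

lemma bb_mem_nilPart (s t : IuIdx n) : bb n K s t ∈ nilPart n K := by
  rcases s with ⟨⟨i, j⟩, hij⟩ | i | i <;> rcases t with ⟨⟨k, l⟩, hkl⟩ | k | k <;>
      simp only [bb] <;> try exact zero_mem _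
  · split
    · exact Submodule.smul_mem _ _ (sub_mem (bE_mem_nilPart i) (bE_mem_nilPart j))
    · split
      · exact sub_mem (ite_mem_sub fun _ => xe_mem_nilPart i l)
          (ite_mem_sub fun _ => xe_mem_nilPart k j)
      · exact zero_mem _
  · exact neg_mem (Submodule.smul_mem _ _ (xe_mem_nilPart i j))
  · exact Submodule.smul_mem _ _ (xe_mem_nilPart k l)

lemma bb_mem_F (m : ℕ) : ∀ s ∈ Fset n 1, ∀ t ∈ Fset n m, bb n K s t ∈ Fm n K (m + 1) := by
  rintro (⟨⟨i, j⟩, hij⟩ | i | i) hs (⟨⟨k, l⟩, hkl⟩ | k | k) ht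
  · -- x_{ij}, x_{kl}
    replace hs : 1 ≤ lam n i j := hs
    replace ht : m ≤ lam n k l := ht
    simp only [bb]
    split
    · exact Submodule.smul_mem _ _ (sub_mem (bE_mem_Fm i _) (bE_mem_Fm j _))
    · rename_i hne
      split
      · rename_i hsum
        refine sub_mem (ite_mem_sub fun hjk => ?_) (ite_mem_sub fun hli => ?_)
        · subst hjk
          refine xe_mem_Fm fun _ => ?_
          rw [lam_add hsum]; omega
        · subst hli
          have hsum' : lam n k l + lam n l j < n := by omega
          refine xe_mem_Fm fun _ => ?_
          rw [lam_add hsum']; omega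
      · exact zero_mem _
  · exact absurd ht id
  · simp only [bb]; exact zero_mem _
  · exact absurd hs id
  · exact absurd hs id
  · exact absurd hs id
  · simp only [bb]; exact zero_mem _
  · simp only [bb]; exact zero_mem _
  · simp only [bb]; exact zero_mem _

lemma Fm_le_nilPart (m : ℕ) : Fm n K m ≤ nilPart n K := by
  rw [Fm, Finsupp.supported_eq_span_single]
  refine Submodule.span_le.mpr ?_
  rintro _ ⟨s, hs, rfl⟩
  rcases s with ⟨⟨i, j⟩, hij⟩ | i | i
  · exact xE_mem_nilPart i j hij
  · exact absurd hs id
  · exact bE_mem_nilPart i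

lemma nilPart_le_F1 : nilPart n K ≤ Fm n K 1 := by
  refine Submodule.span_le.mpr ?_
  rintro v (⟨i, j, h, rfl⟩ | ⟨i, rfl⟩)
  · exact Finsupp.single_mem_supported K 1 (lam_pos h)
  · exact bE_mem_Fm i 1

lemma br_eq_zero_of_right_Fn {u v : Iu n K} (hv : v ∈ Fm n K n) : br n K u v = 0 := by
  have hu : u ∈ Finsupp.supported K K (Set.univ : Set (IuIdx n)) := by
    rw [Finsupp.supported_univ]; trivial
  have h : ∀ s ∈ (Set.univ : Set (IuIdx n)), ∀ t ∈ Fset n n,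
      bb n K s t ∈ (⊥ : Submodule K (Iu n K)) := by
    rintro s - (⟨⟨k, l⟩, hkl⟩ | k | k) ht
    · exact absurd (ht : n ≤ lam n k l) (not_le_of_gt (lam_lt k l))
    · exact absurd ht id
    · rcases s with ⟨⟨i, j⟩, hij⟩ | i | i <;> simp [bb]
  simpa using br_mem_s13 h hu hv

lemma lcs_le_F : ∀ k, lcs n K (nilPart n K) k ≤ Fm n K (k + 1) := by
  intro k
  induction k with
  | zero => exact nilPart_le_F1
  | succ k ih =>
    show bracketSpan n K _ _ ≤ _
    refine Submodule.span_le.mpr ?_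
    rintro w ⟨u, hu, v, hv, rfl⟩
    exact br_mem_s13 (bb_mem_F (k + 1)) (nilPart_le_F1 hu) (ih hv)

lemma lcs_mono {M N : Submodule K (Iu n K)} (h : M ≤ N) :
    ∀ k, lcs n K M k ≤ lcs n K N k := by
  intro k
  induction k with
  | zero => exact h
  | succ k ih =>
    refine Submodule.span_mono ?_
    rintro w ⟨u, hu, v, hv, rfl⟩
    exact ⟨u, h hu, v, ih hv, rfl⟩

lemma lcs_nilPart_eq_bot (hn : 1 ≤ n) : lcs n K (nilPart n K) n = ⊥ := by
  obtain ⟨m, rfl⟩ : ∃ m, n = m + 1 := ⟨n - 1, by omega⟩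
  refine le_bot_iff.mp ?_
  show bracketSpan _ _ _ _ ≤ ⊥
  refine Submodule.span_le.mpr ?_
  rintro w ⟨u, hu, v, hv, rfl⟩
  have : v ∈ Fm (m + 1) K (m + 1) := lcs_le_F m hv
  simp [Submodule.mem_bot, br_eq_zero_of_right_Fn this]

lemma derived_le_nilPart : bracketSpan n K ⊤ ⊤ ≤ nilPart n K := by
  refine Submodule.span_le.mpr ?_
  rintro w ⟨u, -, v, -, rfl⟩
  have hu : u ∈ Finsupp.supported K K (Set.univ : Set (IuIdx n)) := by
    rw [Finsupp.supported_univ]; trivial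
  have hv : v ∈ Finsupp.supported K K (Set.univ : Set (IuIdx n)) := by
    rw [Finsupp.supported_univ]; trivial
  exact br_mem_s13 (fun s _ t _ => bb_mem_nilPart s t) hu hv

end Aux

/-- the span of `{x_{ij}} ∪ {b_i}` is a Lie subalgebra of `Iuₙ` and is
nilpotent; in particular, the derived subalgebra `[Iuₙ, Iuₙ]` is a nilpotent Lie algebra. -/
theorem stmt13 (n : ℕ) (hn : 2 ≤ n) (K : Type*) [Field K] (hK : (2 : K) ≠ 0) :
    (∀ u ∈ nilPart n K, ∀ v ∈ nilPart n K, br n K u v ∈ nilPart n K) ∧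
    (∃ k : ℕ, lcs n K (nilPart n K) k = ⊥) ∧
    (∃ k : ℕ, lcs n K (bracketSpan n K ⊤ ⊤) k = ⊥) := by
  refine ⟨fun u hu v hv => ?_, ⟨n, lcs_nilPart_eq_bot (by omega)⟩, ⟨n, ?_⟩⟩
  · exact Fm_le_nilPart 2 (br_mem_s13 (bb_mem_F 1) (nilPart_le_F1 hu) (nilPart_le_F1 hv))
  · exact le_bot_iff.mp
      ((lcs_mono (derived_le_nilPart) n).trans (lcs_nilPart_eq_bot (by omega)).le)
end
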